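/- For all real numbers s and t with t > 0 and s > 1 + t, one has ∑_{n≥1} (R(n)^t / n^s) · (S(s,t) · ln R(n) − T(s,t) · ln n) = 0, the series being absolutely convergent. -/

import Mathlib

open scoped BigOperators

/-- The radical of a natural number: the product of its distinct prime factors. -/
def rad (n : ℕ) : ℕ := ∏ p ∈ n.primeFactors, p

/-- `S s t = ∑_p (p^s/(p^s − 1)) · (p^t/(p^s − 1 + p^t)) · ln p` over all primes `p`. -/
noncomputable def S (s t : ℝ) : ℝ :=
  ∑' p : Nat.Primes, (((p : ℕ) : ℝ) ^ s / (((p : ℕ) : ℝ) ^ s - 1)) *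
    (((p : ℕ) : ℝ) ^ t / (((p : ℕ) : ℝ) ^ s - 1 + ((p : ℕ) : ℝ) ^ t)) *
    Real.log ((p : ℕ) : ℝ)

/-- `T s t = ∑_p (p^t/(p^s − 1 + p^t)) · ln p` over all primes `p`. -/
noncomputable def T (s t : ℝ) : ℝ :=
  ∑' p : Nat.Primes, (((p : ℕ) : ℝ) ^ t / (((p : ℕ) : ℝ) ^ s - 1 + ((p : ℕ) : ℝ) ^ t)) *
    Real.log ((p : ℕ) : ℝ)


lemma rad_dvd (n : ℕ) : rad n ∣ n := Nat.prod_primeFactors_dvd n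

lemma rad_pos (n : ℕ) : 0 < rad n :=
  Finset.prod_pos fun p hp => (Nat.prime_of_mem_primeFactors hp).pos

lemma rad_le (n : ℕ) (hn : 0 < n) : rad n ≤ n := Nat.le_of_dvd hn (rad_dvd n)

lemma rad_pow {p : ℕ} (hp : p.Prime) {k : ℕ} (hk : k ≠ 0) : rad (p ^ k) = p := by
  rw [rad, Nat.primeFactors_pow _ hk, Nat.Prime.primeFactors hp, Finset.prod_singleton]

lemma rad_mul {a b : ℕ} (ha : a ≠ 0) (hb : b ≠ 0) (h : Nat.Coprime a b) :
    rad (a * b) = rad a * rad b := by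
  rw [rad, Nat.primeFactors_mul ha hb, Finset.prod_union (Nat.Coprime.disjoint_primeFactors h)]
  rfl

-- summability over ℕ+ of n^c for c < -1
lemma summable_pnat_rpow {c : ℝ} (hc : c < -1) :
    Summable (fun n : ℕ+ => ((n : ℕ) : ℝ) ^ c) := by
  have := (Real.summable_nat_rpow (p := c)).2 hc
  exact this.comp_injective PNat.coe_injective

noncomputable def rf (s t : ℝ) (n : ℕ) : ℝ := (rad n : ℝ) ^ t / (n : ℝ) ^ s

section bounds
variable {s t : ℝ}

lemma rf_pos {n : ℕ} (hn : 0 < n) : 0 < rf s t n := by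
  have h1 : (0:ℝ) < (rad n : ℝ) := by exact_mod_cast rad_pos n
  have h2 : (0:ℝ) < (n : ℝ) := by exact_mod_cast hn
  exact div_pos (Real.rpow_pos_of_pos h1 t) (Real.rpow_pos_of_pos h2 s)

lemma rf_le (ht : 0 < t) {n : ℕ} (hn : 0 < n) : rf s t n ≤ ((n:ℝ)) ^ (t - s) := by
  have h2 : (0:ℝ) < (n : ℝ) := by exact_mod_cast hn
  have hradle : ((rad n : ℕ) : ℝ) ≤ (n : ℝ) := by exact_mod_cast rad_le n hn
  have hradnn : (0:ℝ) ≤ ((rad n : ℕ) : ℝ) := by positivity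
  have h1 : ((rad n : ℕ) : ℝ) ^ t ≤ (n:ℝ) ^ t := Real.rpow_le_rpow hradnn hradle ht.le
  calc rf s t n ≤ (n:ℝ) ^ t / (n:ℝ) ^ s := by unfold rf; gcongr
    _ = (n:ℝ) ^ (t - s) := by rw [← Real.rpow_sub h2]

lemma summable_rf (ht : 0 < t) (hs : 1 + t < s) : Summable (fun n : ℕ+ => rf s t (n : ℕ)) := by
  refine Summable.of_nonneg_of_le (fun n => (rf_pos n.pos).le)
    (fun n => rf_le ht n.pos) (summable_pnat_rpow ?_)
  linarith

lemma summable_rf_log (ht : 0 < t) (hs : 1 + t < s) : Summable (fun n : ℕ+ => rf s t (n : ℕ) * Real.log (n : ℕ)) := by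
  set ε : ℝ := (s - t - 1) / 2 with hε
  have hεpos : 0 < ε := by rw [hε]; linarith
  have key : ∀ n : ℕ+, rf s t (n:ℕ) * Real.log (n:ℕ) ≤ ε⁻¹ * ((n:ℕ):ℝ) ^ (t - s + ε) := by
    intro n
    have h2 : (0:ℝ) < ((n:ℕ) : ℝ) := by exact_mod_cast n.pos
    have hlog : Real.log ((n:ℕ):ℝ) ≤ ((n:ℕ):ℝ) ^ ε / ε := Real.log_le_rpow_div h2.le hεpos
    have hlognn : 0 ≤ Real.log ((n:ℕ):ℝ) := Real.log_nonneg (by exact_mod_cast n.one_le)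
    calc rf s t (n:ℕ) * Real.log ((n:ℕ):ℝ)
        ≤ ((n:ℕ):ℝ) ^ (t - s) * (((n:ℕ):ℝ) ^ ε / ε) :=
          mul_le_mul (rf_le ht n.pos) hlog hlognn (Real.rpow_nonneg h2.le _)
      _ = ε⁻¹ * (((n:ℕ):ℝ) ^ (t-s) * ((n:ℕ):ℝ) ^ ε) := by ring
      _ = ε⁻¹ * ((n:ℕ):ℝ) ^ (t - s + ε) := by rw [← Real.rpow_add h2]
  refine Summable.of_nonneg_of_le (fun n => ?_) key ?_
  · have hlognn : 0 ≤ Real.log ((n:ℕ):ℝ) := Real.log_nonneg (by exact_mod_cast n.one_le)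
    exact mul_nonneg (rf_pos n.pos).le hlognn
  · exact (summable_pnat_rpow (by rw [hε]; linarith)).mul_left _

lemma summable_rf_lograd (ht : 0 < t) (hs : 1 + t < s) : Summable (fun n : ℕ+ => rf s t (n : ℕ) * Real.log (rad (n : ℕ))) := by
  refine Summable.of_nonneg_of_le (fun n => ?_) (fun n => ?_) (summable_rf_log ht hs)
  · exact mul_nonneg (rf_pos n.pos).le (Real.log_nonneg (by exact_mod_cast rad_pos (n:ℕ)))
  · refine mul_le_mul_of_nonneg_left ?_ (rf_pos n.pos).le
    exact Real.log_le_log (by exact_mod_cast rad_pos (n:ℕ)) (by exact_mod_cast rad_le (n:ℕ) n.pos)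

end bounds

lemma rf_mul {s t : ℝ} {a b : ℕ} (ha : a ≠ 0) (hb : b ≠ 0) (h : Nat.Coprime a b) :
    rf s t (a * b) = rf s t a * rf s t b := by
  unfold rf
  rw [rad_mul ha hb h]
  push_cast
  rw [Real.mul_rpow (by positivity) (by positivity),
    Real.mul_rpow (by positivity) (by positivity)]
  ring

/-- The equivalence `ℕ × {m : ℕ+ // ¬ p ∣ m} ≃ ℕ+` sending `(k, m)` to `p ^ k * m`. -/
def pEquiv (p : ℕ) (hp : p.Prime) : ℕ × {m : ℕ+ // ¬ (p ∣ (m : ℕ))} ≃ ℕ+ where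
  toFun km := ⟨p ^ km.1 * ((km.2 : ℕ+) : ℕ),
    Nat.mul_pos (Nat.pow_pos hp.pos) (km.2 : ℕ+).pos⟩
  invFun n := ⟨(n : ℕ).factorization p,
    ⟨⟨(n : ℕ) / p ^ ((n : ℕ).factorization p), Nat.ordCompl_pos p n.pos.ne'⟩,
      Nat.not_dvd_ordCompl hp n.pos.ne'⟩⟩
  left_inv := by
    rintro ⟨k, ⟨m, hm⟩⟩
    have hm0 : (m : ℕ) ≠ 0 := m.pos.ne'
    have hfac : (p ^ k * (m : ℕ)).factorization p = k := by
      rw [Nat.factorization_mul (pow_ne_zero _ hp.pos.ne') hm0]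
      simp [hp.factorization_pow, Nat.factorization_eq_zero_of_not_dvd hm]
    refine Prod.ext hfac (Subtype.ext (PNat.coe_injective ?_))
    show (p ^ k * (m : ℕ)) / p ^ ((p ^ k * (m : ℕ)).factorization p) = (m : ℕ)
    rw [hfac]
    exact Nat.mul_div_cancel_left _ (Nat.pow_pos hp.pos)
  right_inv := by
    intro n
    apply PNat.coe_injective
    exact Nat.ordProj_mul_ordCompl_eq_self (n : ℕ) p

lemma log_eq_sum_factorization {n : ℕ} (hn : n ≠ 0) :
    Real.log (n : ℝ) = ∑ p ∈ n.primeFactors, ((n.factorization p : ℕ) : ℝ) * Real.log p := by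
  conv_lhs => rw [← Nat.factorization_prod_pow_eq_self hn]
  rw [Finsupp.prod, Nat.support_factorization]
  push_cast
  rw [Real.log_prod]
  · exact Finset.sum_congr rfl fun p hp => by rw [Real.log_pow]
  · intro p hp
    have := (Nat.prime_of_mem_primeFactors hp).pos
    positivity

lemma log_rad_eq_sum (n : ℕ) :
    Real.log ((rad n : ℕ) : ℝ) = ∑ p ∈ n.primeFactors, Real.log p := by
  rw [rad]
  push_cast
  rw [Real.log_prod]
  exact fun p hp => by
    have := (Nat.prime_of_mem_primeFactors hp).pos
    positivity

lemma rpow_pow (x : ℝ) (hx : 0 ≤ x) (k : ℕ) (s : ℝ) :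
    ((x ^ k : ℝ)) ^ s = (x ^ s) ^ k := by
  rw [← Real.rpow_natCast x k, ← Real.rpow_mul hx, mul_comm, Real.rpow_mul hx,
    Real.rpow_natCast]

lemma rad_one : rad 1 = 1 := by simp [rad]

lemma rf_one (s t : ℝ) : rf s t 1 = 1 := by simp [rf, rad_one]

lemma rf_pow {s t : ℝ} {p : ℕ} (hp : p.Prime) (k : ℕ) :
    rf s t (p ^ k) = (if k = 0 then 1 else ((p:ℝ)) ^ t) * (((p:ℝ) ^ s)⁻¹) ^ k := by
  rcases Nat.eq_zero_or_pos k with hk | hk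
  · subst hk; simp [rf_one]
  · have hk0 : k ≠ 0 := hk.ne'
    have hppos : (0:ℝ) < (p:ℝ) := by exact_mod_cast hp.pos
    rw [rf, rad_pow hp hk0, if_neg hk0]
    push_cast
    rw [rpow_pow _ hppos.le, div_eq_mul_inv, inv_pow]

lemma fac_pk_mul {p m : ℕ} (hp : p.Prime) (hm : ¬ p ∣ m) (hm0 : m ≠ 0) (k : ℕ) :
    (p ^ k * m).factorization p = k := by
  rw [Nat.factorization_mul (pow_ne_zero _ hp.pos.ne') hm0]
  simp [hp.factorization_pow, Nat.factorization_eq_zero_of_not_dvd hm]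

lemma dvd_pk_mul {p m : ℕ} (hp : p.Prime) (hm : ¬ p ∣ m) (k : ℕ) :
    p ∣ p ^ k * m ↔ k ≠ 0 := by
  constructor
  · intro h hk
    subst hk
    simp at h
    exact hm h
  · intro hk
    exact Dvd.dvd.mul_right (dvd_pow_self p hk) m

lemma local_sums {s t : ℝ} (ht : 0 < t) (hs : 1 + t < s) {p : ℕ} (hp : p.Prime) :
    Summable (fun n : ℕ+ => ((((n:ℕ)).factorization p : ℕ) : ℝ) * rf s t (n:ℕ)) ∧
    Summable (fun n : ℕ+ => (if p ∣ (n:ℕ) then (1:ℝ) else 0) * rf s t (n:ℕ)) ∧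
    (∑' n : ℕ+, ((((n:ℕ)).factorization p : ℕ) : ℝ) * rf s t (n:ℕ))
      = ((p:ℝ)^s/((p:ℝ)^s-1)) * ((p:ℝ)^t/((p:ℝ)^s-1+(p:ℝ)^t)) *
        ∑' n : ℕ+, rf s t (n:ℕ) ∧
    (∑' n : ℕ+, (if p ∣ (n:ℕ) then (1:ℝ) else 0) * rf s t (n:ℕ))
      = ((p:ℝ)^t/((p:ℝ)^s-1+(p:ℝ)^t)) * ∑' n : ℕ+, rf s t (n:ℕ) := by
  have hspos : (0:ℝ) < s := by linarith
  have hp1 : (1:ℝ) < (p:ℝ) := by exact_mod_cast hp.one_lt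
  set P : ℝ := (p:ℝ)^s with hPdef
  set Q : ℝ := (p:ℝ)^t with hQdef
  have hP1 : 1 < P := (Real.one_lt_rpow_iff (by linarith)).2 (Or.inl ⟨hp1, hspos⟩)
  have hQ0 : 0 < Q := Real.rpow_pos_of_pos (by linarith) t
  set y : ℝ := P⁻¹ with hydef
  have hy0 : 0 < y := inv_pos.2 (by linarith)
  have hy1 : y < 1 := inv_lt_one_of_one_lt₀ hP1
  have h1y : (0:ℝ) < 1 - y := by linarith
  -- the three coefficient sequences
  set gk : ℕ → ℝ := fun k => (if k = 0 then 1 else Q) * y ^ k with hgkdef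
  set c2 : ℕ → ℝ := fun k => (if k = 0 then 0 else 1) * gk k with hc2def
  set c3 : ℕ → ℝ := fun k => (k : ℝ) * gk k with hc3def
  have hgk_nonneg : ∀ k, 0 ≤ gk k := by
    intro k
    have : (0:ℝ) ≤ (if k = 0 then 1 else Q) := by split <;> positivity
    positivity
  have hc2_nonneg : ∀ k, 0 ≤ c2 k := by
    intro k
    have := hgk_nonneg k
    have : (0:ℝ) ≤ (if k = 0 then (0:ℝ) else 1) := by split <;> norm_num
    positivity
  have hc3_nonneg : ∀ k, 0 ≤ c3 k := fun k => mul_nonneg (by positivity) (hgk_nonneg k)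
  have hgk_sum : Summable gk := by
    refine Summable.of_nonneg_of_le hgk_nonneg (fun k => ?_)
      ((summable_geometric_of_lt_one hy0.le hy1).mul_left (1 + Q))
    have : (if k = 0 then (1:ℝ) else Q) ≤ 1 + Q := by split <;> linarith
    exact mul_le_mul_of_nonneg_right this (by positivity)
  have hc2_sum : Summable c2 := by
    refine Summable.of_nonneg_of_le hc2_nonneg (fun k => ?_) hgk_sum
    by_cases hk : k = 0 <;> simp [hc2def, hk, hgk_nonneg k, hgk_nonneg 0]
  have hc3_eq : c3 = fun k : ℕ => Q * ((k:ℝ) * y ^ k) := by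
    funext k
    rcases Nat.eq_zero_or_pos k with hk | hk
    · subst hk; simp [hc3def]
    · simp only [hc3def, hgkdef, if_neg hk.ne']; ring
  have hc3_sum : Summable c3 := by
    rw [hc3_eq]
    refine Summable.mul_left Q ?_
    have h := summable_pow_mul_geometric_of_norm_lt_one (R := ℝ) 1
      (r := y) (by rw [Real.norm_eq_abs, abs_of_pos hy0]; exact hy1)
    simpa using h
  -- sums of coefficient sequences
  have tgk : ∑' k, gk k = 1 + (Q * y) * (1 - y)⁻¹ := by
    rw [Summable.tsum_eq_zero_add hgk_sum]
    have h0 : gk 0 = 1 := by simp [hgkdef]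
    have hsucc : ∀ k : ℕ, gk (k + 1) = (Q * y) * y ^ k := by
      intro k
      simp only [hgkdef, if_neg (Nat.succ_ne_zero k), pow_succ]
      ring
    rw [h0]
    congr 1
    rw [tsum_congr hsucc, tsum_mul_left, tsum_geometric_of_lt_one hy0.le hy1]
  have tc2 : ∑' k, c2 k = (Q * y) * (1 - y)⁻¹ := by
    rw [Summable.tsum_eq_zero_add hc2_sum]
    have h0 : c2 0 = 0 := by simp [hc2def]
    have hsucc : ∀ k : ℕ, c2 (k + 1) = (Q * y) * y ^ k := by
      intro k
      simp only [hc2def, hgkdef, if_neg (Nat.succ_ne_zero k), pow_succ]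
      ring
    rw [h0, zero_add, tsum_congr hsucc, tsum_mul_left,
      tsum_geometric_of_lt_one hy0.le hy1]
  have tc3 : ∑' k, c3 k = Q * (y / (1 - y) ^ 2) := by
    rw [hc3_eq, tsum_mul_left, tsum_coe_mul_geometric_of_norm_lt_one
      (by rw [Real.norm_eq_abs, abs_of_pos hy0]; exact hy1)]
  -- the subtype sum
  set e := pEquiv p hp with hedef
  set rfm : {m : ℕ+ // ¬ (p ∣ (m:ℕ))} → ℝ := fun m => rf s t ((m : ℕ+) : ℕ) with hrfmdef
  have hG : Summable rfm := (summable_rf ht hs).comp_injective Subtype.val_injective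
  have hG_nonneg : ∀ m, 0 ≤ rfm m := fun m => (rf_pos (m : ℕ+).pos).le
  -- main engine
  have main : ∀ (c : ℕ → ℝ) (h : ℕ+ → ℝ), Summable c → (∀ k, 0 ≤ c k) →
      (∀ (k : ℕ) (m : {m : ℕ+ // ¬ (p ∣ (m:ℕ))}), h (e (k, m)) = c k * rfm m) →
      Summable h ∧ ∑' n : ℕ+, h n = (∑' k, c k) * (∑' m, rfm m) := by
    intro c h hc hc0 hrel
    have hcn : Summable (fun k => ‖c k‖) := by simpa [Real.norm_eq_abs] using hc.abs
    have hGn : Summable (fun m => ‖rfm m‖) := by simpa [Real.norm_eq_abs] using hG.abs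
    have hprod : Summable (fun z : ℕ × {m : ℕ+ // ¬ (p ∣ (m:ℕ))} => c z.1 * rfm z.2) :=
      summable_mul_of_summable_norm hcn hGn
    constructor
    · exact e.summable_iff.mp (hprod.congr fun z => (hrel z.1 z.2).symm)
    · rw [← e.tsum_eq h]
      rw [tsum_congr (fun z :  ℕ × {m : ℕ+ // ¬ (p ∣ (m:ℕ))} => hrel z.1 z.2)]
      exact (tsum_mul_tsum_of_summable_norm hcn hGn).symm
  have hcoe : ∀ (k : ℕ) (m : {m : ℕ+ // ¬ (p ∣ (m:ℕ))}),
      ((e (k, m) : ℕ+) : ℕ) = p ^ k * ((m : ℕ+) : ℕ) := fun k m => rfl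
  have hrfmul : ∀ (k : ℕ) (m : {m : ℕ+ // ¬ (p ∣ (m:ℕ))}),
      rf s t (p ^ k * ((m : ℕ+) : ℕ)) = gk k * rfm m := by
    intro k m
    rw [rf_mul (pow_ne_zero _ hp.pos.ne') (m : ℕ+).pos.ne'
      (Nat.Coprime.pow_left k (hp.coprime_iff_not_dvd.2 m.2)), rf_pow hp]
  have hrel1 : ∀ (k : ℕ) (m : {m : ℕ+ // ¬ (p ∣ (m:ℕ))}),
      (fun n : ℕ+ => rf s t (n:ℕ)) (e (k, m)) = gk k * rfm m := by
    intro k m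
    simp only []
    rw [hcoe k m]
    exact hrfmul k m
  have hrel2 : ∀ (k : ℕ) (m : {m : ℕ+ // ¬ (p ∣ (m:ℕ))}),
      (fun n : ℕ+ => (if p ∣ (n:ℕ) then (1:ℝ) else 0) * rf s t (n:ℕ)) (e (k, m))
        = c2 k * rfm m := by
    intro k m
    simp only []
    rw [hcoe k m, hrfmul k m]
    by_cases hk : k = 0
    · rw [if_neg (by rw [dvd_pk_mul hp m.2]; simp [hk])]
      simp [hc2def, hk]
    · rw [if_pos ((dvd_pk_mul hp m.2 k).2 hk)]
      simp [hc2def, if_neg hk]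
  have hrel3 : ∀ (k : ℕ) (m : {m : ℕ+ // ¬ (p ∣ (m:ℕ))}),
      (fun n : ℕ+ => ((((n:ℕ)).factorization p : ℕ) : ℝ) * rf s t (n:ℕ)) (e (k, m))
        = c3 k * rfm m := by
    intro k m
    simp only []
    rw [hcoe k m, hrfmul k m, fac_pk_mul hp m.2 (m : ℕ+).pos.ne']
    simp only [hc3def]
    ring
  obtain ⟨hsm1, htm1⟩ := main gk (fun n : ℕ+ => rf s t (n:ℕ)) hgk_sum hgk_nonneg hrel1
  obtain ⟨hsm2, htm2⟩ := main c2 (fun n : ℕ+ => (if p ∣ (n:ℕ) then (1:ℝ) else 0) * rf s t (n:ℕ)) hc2_sum hc2_nonneg hrel2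
  obtain ⟨hsm3, htm3⟩ := main c3 (fun n : ℕ+ => ((((n:ℕ)).factorization p : ℕ) : ℝ) * rf s t (n:ℕ)) hc3_sum hc3_nonneg hrel3
  refine ⟨hsm3, hsm2, ?_, ?_⟩
  · rw [htm3, htm1, tc3, tgk, hydef]
    have hP0 : P ≠ 0 := by linarith
    have hP1' : P - 1 ≠ 0 := by linarith
    have hPQ : P - 1 + Q ≠ 0 := by linarith
    have h1y' : 1 - P⁻¹ ≠ 0 := by
      rw [hydef] at h1y; linarith
    field_simp
  · rw [htm2, htm1, tc2, tgk, hydef]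
    have hP0 : P ≠ 0 := by linarith
    have hP1' : P - 1 ≠ 0 := by linarith
    have hPQ : P - 1 + Q ≠ 0 := by linarith
    have h1y' : 1 - P⁻¹ ≠ 0 := by
      rw [hydef] at h1y; linarith
    field_simp

def primesOf (n : ℕ) : Finset Nat.Primes := Finset.subtype _ n.primeFactors

lemma mem_primesOf {n : ℕ} {q : Nat.Primes} : q ∈ primesOf n ↔ (q : ℕ) ∈ n.primeFactors := by
  unfold primesOf
  exact Finset.mem_subtype

lemma sum_primesOf {n : ℕ} (f : ℕ → ℝ) :
    ∑ q ∈ primesOf n, f (q : ℕ) = ∑ p ∈ n.primeFactors, f p := by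
  refine (Finset.sum_subtype_eq_sum_filter f (p := Nat.Prime)).trans ?_
  congr 1
  exact Finset.filter_true_of_mem fun p hp => Nat.prime_of_mem_primeFactors hp

lemma log_prime_nonneg (q : Nat.Primes) : 0 ≤ Real.log ((q : ℕ) : ℝ) :=
  Real.log_nonneg (by exact_mod_cast q.2.one_lt.le)

lemma global_S {s t : ℝ} (ht : 0 < t) (hs : 1 + t < s) :
    (∑' n : ℕ+, rf s t (n:ℕ) * Real.log ((n:ℕ):ℝ))
      = (∑' n : ℕ+, rf s t (n:ℕ)) * S s t := by
  set F := ∑' n : ℕ+, rf s t (n:ℕ) with hF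
  set u : ℕ+ × Nat.Primes → ℝ := fun z =>
    ((((z.1:ℕ)).factorization (z.2:ℕ) : ℕ) : ℝ) * Real.log ((z.2:ℕ):ℝ) * rf s t (z.1:ℕ)
    with hudef
  have hnn : 0 ≤ u := by
    intro z
    have h1 := log_prime_nonneg z.2
    have h2 : 0 ≤ rf s t (z.1:ℕ) := (rf_pos (z.1).pos).le
    simp only [hudef]
    positivity
  have hzero : ∀ (n : ℕ+) (q : Nat.Primes), q ∉ primesOf (n:ℕ) → u (n, q) = 0 := by
    intro n q h
    rw [mem_primesOf] at h
    have hnd : ¬ ((q:ℕ) ∣ (n:ℕ)) := fun hd => h (Nat.mem_primeFactors.2 ⟨q.2, hd, n.pos.ne'⟩)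
    simp only [hudef]
    rw [Nat.factorization_eq_zero_of_not_dvd hnd]
    simp
  have hslice : ∀ n : ℕ+, ∑' q : Nat.Primes, u (n, q)
      = rf s t (n:ℕ) * Real.log ((n:ℕ):ℝ) := by
    intro n
    rw [tsum_eq_sum (hzero n)]
    have hsp := sum_primesOf (n := (n:ℕ))
      (fun p => ((((n:ℕ)).factorization p : ℕ) : ℝ) * Real.log (p:ℝ) * rf s t (n:ℕ))
    rw [hsp, ← Finset.sum_mul, ← log_eq_sum_factorization n.pos.ne', mul_comm]
  have hslice_summable : ∀ n : ℕ+, Summable (fun q : Nat.Primes => u (n, q)) :=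
    fun n => summable_of_ne_finset_zero (hzero n)
  have hu : Summable u := (summable_prod_of_nonneg hnn).2
    ⟨hslice_summable, (summable_rf_log ht hs).congr (fun n => (hslice n).symm)⟩
  have t1 : ∑' z : ℕ+ × Nat.Primes, u z = ∑' n : ℕ+, rf s t (n:ℕ) * Real.log ((n:ℕ):ℝ) := by
    rw [Summable.tsum_prod' hu hslice_summable]
    exact tsum_congr hslice
  have hu' : Summable (fun w : Nat.Primes × ℕ+ => u w.swap) := hu.prod_symm
  have t2 : (∑' w : Nat.Primes × ℕ+, u w.swap) = ∑' z : ℕ+ × Nat.Primes, u z :=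
    Equiv.tsum_eq (Equiv.prodComm Nat.Primes ℕ+) u
  have hqslice_summable : ∀ q : Nat.Primes, Summable (fun n : ℕ+ => u (n, q)) := by
    intro q
    exact (((local_sums ht hs q.2).1).mul_left (Real.log ((q:ℕ):ℝ))).congr
      (fun n => by simp only [hudef]; ring)
  have hinner : ∀ q : Nat.Primes, (∑' n : ℕ+, u (n, q))
      = Real.log ((q:ℕ):ℝ) * ((((q:ℕ):ℝ)^s/(((q:ℕ):ℝ)^s-1)) *
        ((((q:ℕ)):ℝ)^t/(((q:ℕ):ℝ)^s-1+((q:ℕ):ℝ)^t)) * F) := by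
    intro q
    have hls := (local_sums ht hs q.2).2.2.1
    calc ∑' n : ℕ+, u (n, q)
        = ∑' n : ℕ+, Real.log ((q:ℕ):ℝ) *
            (((((n:ℕ)).factorization (q:ℕ) : ℕ) : ℝ) * rf s t (n:ℕ)) :=
          tsum_congr (fun n => by simp only [hudef]; ring)
      _ = Real.log ((q:ℕ):ℝ) * ∑' n : ℕ+, ((((n:ℕ)).factorization (q:ℕ) : ℕ) : ℝ) * rf s t (n:ℕ) :=
          tsum_mul_left
      _ = _ := by rw [hls]
  have t3 : (∑' w : Nat.Primes × ℕ+, u w.swap) = ∑' q : Nat.Primes, ∑' n : ℕ+, u (n, q) :=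
    Summable.tsum_prod' hu' (fun q => hqslice_summable q)
  rw [← t1, ← t2, t3, tsum_congr hinner, S]
  rw [← tsum_mul_left (a := F)]
  exact tsum_congr (fun q => by ring)

lemma global_T {s t : ℝ} (ht : 0 < t) (hs : 1 + t < s) :
    (∑' n : ℕ+, rf s t (n:ℕ) * Real.log ((rad (n:ℕ) : ℕ):ℝ))
      = (∑' n : ℕ+, rf s t (n:ℕ)) * T s t := by
  set F := ∑' n : ℕ+, rf s t (n:ℕ) with hF
  set u : ℕ+ × Nat.Primes → ℝ := fun z =>
    (if (z.2:ℕ) ∣ (z.1:ℕ) then (1:ℝ) else 0) * Real.log ((z.2:ℕ):ℝ) * rf s t (z.1:ℕ)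
    with hudef
  have hnn : 0 ≤ u := by
    intro z
    have h1 := log_prime_nonneg z.2
    have h2 : 0 ≤ rf s t (z.1:ℕ) := (rf_pos (z.1).pos).le
    have h3 : (0:ℝ) ≤ (if (z.2:ℕ) ∣ (z.1:ℕ) then (1:ℝ) else 0) := by split <;> norm_num
    simp only [hudef]
    positivity
  have hzero : ∀ (n : ℕ+) (q : Nat.Primes), q ∉ primesOf (n:ℕ) → u (n, q) = 0 := by
    intro n q h
    rw [mem_primesOf] at h
    have hnd : ¬ ((q:ℕ) ∣ (n:ℕ)) := fun hd => h (Nat.mem_primeFactors.2 ⟨q.2, hd, n.pos.ne'⟩)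
    simp only [hudef]
    rw [if_neg hnd]
    simp
  have hslice : ∀ n : ℕ+, ∑' q : Nat.Primes, u (n, q)
      = rf s t (n:ℕ) * Real.log ((rad (n:ℕ) : ℕ):ℝ) := by
    intro n
    rw [tsum_eq_sum (hzero n)]
    have hsp := sum_primesOf (n := (n:ℕ))
      (fun p => (if p ∣ (n:ℕ) then (1:ℝ) else 0) * Real.log (p:ℝ) * rf s t (n:ℕ))
    rw [hsp]
    have : ∀ p ∈ ((n:ℕ)).primeFactors,
        (if p ∣ (n:ℕ) then (1:ℝ) else 0) * Real.log (p:ℝ) * rf s t (n:ℕ)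
          = Real.log (p:ℝ) * rf s t (n:ℕ) := by
      intro p hp
      rw [if_pos (Nat.dvd_of_mem_primeFactors hp), one_mul]
    rw [Finset.sum_congr rfl this, ← Finset.sum_mul, ← log_rad_eq_sum, mul_comm]
  have hslice_summable : ∀ n : ℕ+, Summable (fun q : Nat.Primes => u (n, q)) :=
    fun n => summable_of_ne_finset_zero (hzero n)
  have hu : Summable u := (summable_prod_of_nonneg hnn).2
    ⟨hslice_summable, (summable_rf_lograd ht hs).congr (fun n => (hslice n).symm)⟩
  have t1 : ∑' z : ℕ+ × Nat.Primes, u z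
      = ∑' n : ℕ+, rf s t (n:ℕ) * Real.log ((rad (n:ℕ) : ℕ):ℝ) := by
    rw [Summable.tsum_prod' hu hslice_summable]
    exact tsum_congr hslice
  have hu' : Summable (fun w : Nat.Primes × ℕ+ => u w.swap) := hu.prod_symm
  have t2 : (∑' w : Nat.Primes × ℕ+, u w.swap) = ∑' z : ℕ+ × Nat.Primes, u z :=
    Equiv.tsum_eq (Equiv.prodComm Nat.Primes ℕ+) u
  have hqslice_summable : ∀ q : Nat.Primes, Summable (fun n : ℕ+ => u (n, q)) := by
    intro q
    exact (((local_sums ht hs q.2).2.1).mul_left (Real.log ((q:ℕ):ℝ))).congr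
      (fun n => by simp only [hudef]; ring)
  have hinner : ∀ q : Nat.Primes, (∑' n : ℕ+, u (n, q))
      = Real.log ((q:ℕ):ℝ) * (((((q:ℕ)):ℝ)^t/(((q:ℕ):ℝ)^s-1+((q:ℕ):ℝ)^t)) * F) := by
    intro q
    have hls := (local_sums ht hs q.2).2.2.2
    calc ∑' n : ℕ+, u (n, q)
        = ∑' n : ℕ+, Real.log ((q:ℕ):ℝ) *
            ((if (q:ℕ) ∣ (n:ℕ) then (1:ℝ) else 0) * rf s t (n:ℕ)) :=
          tsum_congr (fun n => by simp only [hudef]; ring)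
      _ = Real.log ((q:ℕ):ℝ) * ∑' n : ℕ+, (if (q:ℕ) ∣ (n:ℕ) then (1:ℝ) else 0) * rf s t (n:ℕ) :=
          tsum_mul_left
      _ = _ := by rw [hls]
  have t3 : (∑' w : Nat.Primes × ℕ+, u w.swap) = ∑' q : Nat.Primes, ∑' n : ℕ+, u (n, q) :=
    Summable.tsum_prod' hu' (fun q => hqslice_summable q)
  rw [← t1, ← t2, t3, tsum_congr hinner, T]
  rw [← tsum_mul_left (a := F)]
  exact tsum_congr (fun q => by ring)

lemma S_nonneg {s t : ℝ} (ht : 0 < t) (hs : 1 + t < s) : 0 ≤ S s t := by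
  refine tsum_nonneg (fun q => ?_)
  have hq1 : (1:ℝ) < ((q:ℕ):ℝ) := by exact_mod_cast q.2.one_lt
  have hP1 : 1 < ((q:ℕ):ℝ) ^ s := (Real.one_lt_rpow_iff (by linarith)).2
    (Or.inl ⟨hq1, by linarith⟩)
  have hQ0 : 0 < ((q:ℕ):ℝ) ^ t := Real.rpow_pos_of_pos (by linarith) t
  have hlog := log_prime_nonneg q
  have h1 : 0 ≤ ((q:ℕ):ℝ) ^ s / (((q:ℕ):ℝ) ^ s - 1) :=
    div_nonneg (by linarith) (by linarith)
  have h2 : 0 ≤ ((q:ℕ):ℝ) ^ t / (((q:ℕ):ℝ) ^ s - 1 + ((q:ℕ):ℝ) ^ t) :=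
    div_nonneg (by linarith) (by linarith)
  exact mul_nonneg (mul_nonneg h1 h2) hlog

lemma T_nonneg {s t : ℝ} (ht : 0 < t) (hs : 1 + t < s) : 0 ≤ T s t := by
  refine tsum_nonneg (fun q => ?_)
  have hq1 : (1:ℝ) < ((q:ℕ):ℝ) := by exact_mod_cast q.2.one_lt
  have hP1 : 1 < ((q:ℕ):ℝ) ^ s := (Real.one_lt_rpow_iff (by linarith)).2
    (Or.inl ⟨hq1, by linarith⟩)
  have hQ0 : 0 < ((q:ℕ):ℝ) ^ t := Real.rpow_pos_of_pos (by linarith) t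
  have hlog := log_prime_nonneg q
  have h2 : 0 ≤ ((q:ℕ):ℝ) ^ t / (((q:ℕ):ℝ) ^ s - 1 + ((q:ℕ):ℝ) ^ t) :=
    div_nonneg (by linarith) (by linarith)
  exact mul_nonneg h2 hlog

theorem stmt_8 (s t : ℝ) (ht : 0 < t) (hs : 1 + t < s) :
    Summable (fun n : ℕ+ =>
      |((rad n : ℝ) ^ t / (n : ℝ) ^ s) *
        (S s t * Real.log (rad n : ℝ) - T s t * Real.log (n : ℝ))|) ∧
    (∑' n : ℕ+, ((rad n : ℝ) ^ t / (n : ℝ) ^ s) *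
        (S s t * Real.log (rad n : ℝ) - T s t * Real.log (n : ℝ))) = 0 := by
  have hfr := summable_rf_lograd (s := s) ht hs
  have hfn := summable_rf_log (s := s) ht hs
  have hS0 := S_nonneg ht hs
  have hT0 := T_nonneg ht hs
  have hB := global_S ht hs
  have hA := global_T ht hs
  have hlogn : ∀ n : ℕ+, 0 ≤ Real.log ((n:ℕ):ℝ) :=
    fun n => Real.log_nonneg (by exact_mod_cast n.one_le)
  have hlogr : ∀ n : ℕ+, 0 ≤ Real.log ((rad (n:ℕ) : ℕ):ℝ) :=
    fun n => Real.log_nonneg (by exact_mod_cast rad_pos (n:ℕ))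
  constructor
  · show Summable (fun n : ℕ+ =>
      |rf s t (n:ℕ) * (S s t * Real.log ((rad (n:ℕ) : ℕ):ℝ) - T s t * Real.log ((n:ℕ):ℝ))|)
    refine Summable.of_nonneg_of_le (fun n => abs_nonneg _) (fun n => ?_)
      ((hfr.mul_left (S s t)).add (hfn.mul_left (T s t)))
    rw [abs_mul, abs_of_nonneg (rf_pos n.pos).le]
    have hb : |S s t * Real.log ((rad (n:ℕ) : ℕ):ℝ) - T s t * Real.log ((n:ℕ):ℝ)|
        ≤ S s t * Real.log ((rad (n:ℕ) : ℕ):ℝ) + T s t * Real.log ((n:ℕ):ℝ) := by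
      refine (abs_sub _ _).trans ?_
      rw [abs_of_nonneg (mul_nonneg hS0 (hlogr n)), abs_of_nonneg (mul_nonneg hT0 (hlogn n))]
    calc rf s t (n:ℕ) * |S s t * Real.log ((rad (n:ℕ) : ℕ):ℝ) - T s t * Real.log ((n:ℕ):ℝ)|
        ≤ rf s t (n:ℕ) * (S s t * Real.log ((rad (n:ℕ) : ℕ):ℝ) + T s t * Real.log ((n:ℕ):ℝ)) :=
          mul_le_mul_of_nonneg_left hb (rf_pos n.pos).le
      _ = S s t * (rf s t (n:ℕ) * Real.log ((rad (n:ℕ) : ℕ):ℝ))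
            + T s t * (rf s t (n:ℕ) * Real.log ((n:ℕ):ℝ)) := by ring
  · show (∑' n : ℕ+, rf s t (n:ℕ) *
      (S s t * Real.log ((rad (n:ℕ) : ℕ):ℝ) - T s t * Real.log ((n:ℕ):ℝ))) = 0
    have heq : ∀ n : ℕ+, rf s t (n:ℕ) *
        (S s t * Real.log ((rad (n:ℕ) : ℕ):ℝ) - T s t * Real.log ((n:ℕ):ℝ))
        = S s t * (rf s t (n:ℕ) * Real.log ((rad (n:ℕ) : ℕ):ℝ))
          - T s t * (rf s t (n:ℕ) * Real.log ((n:ℕ):ℝ)) := fun n => by ring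
    rw [tsum_congr heq, Summable.tsum_sub ((hfr.mul_left (S s t))) ((hfn.mul_left (T s t))),
      tsum_mul_left, tsum_mul_left, hA, hB]
    ring
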